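/- Let m ≥ 4 be even and let π = (0,1,…,m-1) be the cyclic shift on ℤ_m. Then the permutation (1, m-2)·π^{-2} (transposition of 1 and m-2 followed by the inverse square of the shift) is a single m-cycle. -/
import Mathlib

private lemma aux_cycle (m : ℕ) (hm : 4 ≤ m) (K : ℕ) (hK : m = K + K)
    (σ : Equiv.Perm (Fin m))
    (hstep : ∀ x : Fin m, 2 ≤ x.val → x.val ≠ m-2 → (σ x).val = x.val - 2)
    (hσ0 : ∀ x : Fin m, x.val = 0 → (σ x).val = m - 2)
    (hσ1 : ∀ x : Fin m, x.val = 1 → (σ x).val = m - 4)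
    (hσm2 : ∀ x : Fin m, x.val = m - 2 → (σ x).val = m - 1) :
    Equiv.Perm.IsCycle σ ∧ Equiv.Perm.support σ = Finset.univ := by
  have hsc1 : ∀ x y : Fin m, σ x = y → Equiv.Perm.SameCycle σ x y := by
    intro x y h
    exact ⟨1, (zpow_one σ).symm ▸ h⟩
  -- odd chain down from m-1
  have hodd : ∀ j : ℕ, 2*j ≤ m-2 →
      Equiv.Perm.SameCycle σ ⟨m-1, by omega⟩ ⟨m-1-2*j, by omega⟩ := by
    intro j
    induction j with
    | zero =>
      intro _
      have he2 : (⟨m-1-2*0, by omega⟩ : Fin m) = ⟨m-1, by omega⟩ := by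
        apply Fin.ext; show m-1-2*0 = m-1; omega
      exact he2 ▸ Equiv.Perm.SameCycle.refl σ ⟨m-1, by omega⟩
    | succ j ih =>
      intro hj
      have h1 : 2*j ≤ m-2 := by omega
      have ha2 : 2 ≤ m-1-2*j := by omega
      have hane : m-1-2*j ≠ m-2 := by omega
      have hs := hstep ⟨m-1-2*j, by omega⟩ ha2 hane
      have heq : σ ⟨m-1-2*j, by omega⟩ = ⟨m-1-2*(j+1), by omega⟩ := by
        apply Fin.ext
        refine hs.trans ?_
        show m-1-2*j - 2 = m-1-2*(j+1)
        omega
      exact (ih h1).trans (hsc1 _ _ heq)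
  -- even chain down from m-4
  have hevenc : ∀ j : ℕ, 2*j ≤ m-4 →
      Equiv.Perm.SameCycle σ ⟨m-4, by omega⟩ ⟨m-4-2*j, by omega⟩ := by
    intro j
    induction j with
    | zero =>
      intro _
      have he2 : (⟨m-4-2*0, by omega⟩ : Fin m) = ⟨m-4, by omega⟩ := by
        apply Fin.ext; show m-4-2*0 = m-4; omega
      exact he2 ▸ Equiv.Perm.SameCycle.refl σ ⟨m-4, by omega⟩
    | succ j ih =>
      intro hj
      have h1 : 2*j ≤ m-4 := by omega
      have ha2 : 2 ≤ m-4-2*j := by omega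
      have hane : m-4-2*j ≠ m-2 := by omega
      have hs := hstep ⟨m-4-2*j, by omega⟩ ha2 hane
      have heq : σ ⟨m-4-2*j, by omega⟩ = ⟨m-4-2*(j+1), by omega⟩ := by
        apply Fin.ext
        refine hs.trans ?_
        show m-4-2*j - 2 = m-4-2*(j+1)
        omega
      exact (ih h1).trans (hsc1 _ _ heq)
  -- base connections
  have h0m2 : Equiv.Perm.SameCycle σ ⟨0, by omega⟩ ⟨m-2, by omega⟩ :=
    hsc1 _ _ (Fin.ext (hσ0 _ rfl))
  have hm2m1 : Equiv.Perm.SameCycle σ ⟨m-2, by omega⟩ ⟨m-1, by omega⟩ :=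
    hsc1 _ _ (Fin.ext (hσm2 _ rfl))
  have h0m1 := h0m2.trans hm2m1
  have h01 : Equiv.Perm.SameCycle σ ⟨0, by omega⟩ ⟨1, by omega⟩ := by
    have hj : 2*(K-1) ≤ m-2 := by omega
    have he2 : (⟨m-1-2*(K-1), by omega⟩ : Fin m) = ⟨1, by omega⟩ := by
      apply Fin.ext; show m-1-2*(K-1) = 1; omega
    exact he2 ▸ (h0m1.trans (hodd (K-1) hj))
  have h0m4 : Equiv.Perm.SameCycle σ ⟨0, by omega⟩ ⟨m-4, by omega⟩ :=
    h01.trans (hsc1 _ _ (Fin.ext (hσ1 _ rfl)))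
  -- every element is in the cycle of 0
  have hall : ∀ y : Fin m, Equiv.Perm.SameCycle σ ⟨0, by omega⟩ y := by
    intro y
    have hylt : y.val < m := y.isLt
    rcases Nat.even_or_odd y.val with he | ho
    · obtain ⟨k, hk⟩ := he
      by_cases hy : y.val = m-2
      · exact (Fin.ext hy.symm : (⟨m-2, by omega⟩ : Fin m) = y) ▸ h0m2
      · have hy4 : y.val ≤ m-4 := by omega
        have hj : 2*((m-4-y.val)/2) = m-4-y.val := by omega
        have he2 : (⟨m-4-2*((m-4-y.val)/2), by omega⟩ : Fin m) = y := by
          apply Fin.ext; show m-4-2*((m-4-y.val)/2) = y.val; omega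
        exact he2 ▸ (h0m4.trans (hevenc ((m-4-y.val)/2) (by omega)))
    · obtain ⟨k, hk⟩ := ho
      have hj : 2*((m-1-y.val)/2) = m-1-y.val := by omega
      have he2 : (⟨m-1-2*((m-1-y.val)/2), by omega⟩ : Fin m) = y := by
        apply Fin.ext; show m-1-2*((m-1-y.val)/2) = y.val; omega
      exact he2 ▸ (h0m1.trans (hodd ((m-1-y.val)/2) (by omega)))
  have hfix : ∀ x : Fin m, σ x ≠ x := by
    intro x h
    have hv : (σ x).val = x.val := congrArg Fin.val h
    have hxlt : x.val < m := x.isLt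
    by_cases h1 : x.val = 1
    · have := hσ1 x h1
      omega
    · by_cases h2 : x.val = m-2
      · have := hσm2 x h2
        omega
      · by_cases h0 : x.val = 0
        · have := hσ0 x h0
          omega
        · have := hstep x (by omega) h2
          omega
  constructor
  · exact ⟨⟨0, by omega⟩, fun h => hfix _ h, fun y _ => hall y⟩
  · rw [Finset.eq_univ_iff_forall]
    intro x
    rw [Equiv.Perm.mem_support]
    exact hfix x

/-- Let `m ≥ 4` be even and `π = (0,1,…,m-1)` the cyclic shift on
`ℤ_m`.  The permutation `(1, m-2)·π^{-2}` (transposition of `1` and `m-2` first,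
then the inverse square of the shift, composition left-to-right) is a single
`m`-cycle. -/
theorem swap_mul_shift_inv_sq_isCycle (m : ℕ) (hm : 4 ≤ m) (heven : Even m)
    (π : Equiv.Perm (Fin m)) (hπ : ∀ x : Fin m, (π x).val = (x.val + 1) % m) :
    Equiv.Perm.IsCycle
      ((Equiv.swap (⟨1, by omega⟩ : Fin m) ⟨m - 2, by omega⟩).trans (π ^ (-2 : ℤ))) ∧
    Equiv.Perm.support
      ((Equiv.swap (⟨1, by omega⟩ : Fin m) ⟨m - 2, by omega⟩).trans (π ^ (-2 : ℤ))) =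
      Finset.univ := by
  obtain ⟨K, hK⟩ := heven
  set σ := (Equiv.swap (⟨1, by omega⟩ : Fin m) ⟨m - 2, by omega⟩).trans (π ^ (-2 : ℤ))
    with hσdef
  -- formula for π⁻¹
  have hinv : ∀ x : Fin m, ((π⁻¹) x).val = (x.val + (m-1)) % m := by
    intro x
    have h1 : π ((π⁻¹) x) = x := by simp
    have h2 := hπ (π⁻¹ x)
    rw [h1] at h2
    set y := ((π⁻¹) x).val with hy
    have hylt : y < m := ((π⁻¹) x).isLt
    have hxlt : x.val < m := x.isLt
    rcases eq_or_lt_of_le (Nat.succ_le_of_lt hylt) with h | h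
    · -- y + 1 = m
      have : x.val = 0 := by rw [h2, show y+1 = m from h, Nat.mod_self]
      rw [this]
      have : (0 + (m-1)) % m = m - 1 := by
        rw [Nat.zero_add]; exact Nat.mod_eq_of_lt (by omega)
      omega
    · have : x.val = y + 1 := by rw [h2]; exact Nat.mod_eq_of_lt h
      rw [this]
      have he : y + 1 + (m-1) = y + m := by omega
      rw [he, Nat.add_mod_right]
      exact (Nat.mod_eq_of_lt hylt).symm
  have hzp : ∀ x : Fin m, (π ^ (-2:ℤ)) x = π⁻¹ (π⁻¹ x) := by
    intro x
    have h : (π ^ (-2:ℤ)) = π⁻¹ * π⁻¹ := by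
      rw [zpow_neg, zpow_two, mul_inv_rev]
    rw [h]; rfl
  have hinv2 : ∀ x : Fin m, (π⁻¹ (π⁻¹ x)).val = (x.val + (m-2)) % m := by
    intro x
    rw [hinv, hinv, Nat.mod_add_mod]
    have he : x.val + (m-1) + (m-1) = x.val + (m-2) + m := by omega
    rw [he, Nat.add_mod_right]
  have hσval : ∀ x : Fin m,
      (σ x).val = (((Equiv.swap (⟨1, by omega⟩ : Fin m) ⟨m - 2, by omega⟩) x).val + (m-2)) % m := by
    intro x
    rw [hσdef]
    simp only [Equiv.trans_apply, hzp, hinv2]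
  -- generic step
  have hstep : ∀ x : Fin m, 2 ≤ x.val → x.val ≠ m-2 → (σ x).val = x.val - 2 := by
    intro x h2 hne
    rw [hσval, Equiv.swap_apply_of_ne_of_ne
      (by intro h; apply absurd (congrArg Fin.val h); simp; omega)
      (by intro h; apply absurd (congrArg Fin.val h); simp; omega)]
    have he : x.val + (m-2) = (x.val - 2) + m := by omega
    rw [he, Nat.add_mod_right]
    exact Nat.mod_eq_of_lt (by omega)
  have hσ0 : ∀ x : Fin m, x.val = 0 → (σ x).val = m - 2 := by
    intro x hx
    rw [hσval, Equiv.swap_apply_of_ne_of_ne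
      (by intro h; apply absurd (congrArg Fin.val h); simp; omega)
      (by intro h; apply absurd (congrArg Fin.val h); simp; omega)]
    rw [hx, Nat.zero_add]
    exact Nat.mod_eq_of_lt (by omega)
  have hσ1 : ∀ x : Fin m, x.val = 1 → (σ x).val = m - 4 := by
    intro x hx
    have hxe : x = ⟨1, by omega⟩ := Fin.ext hx
    rw [hxe, hσval, Equiv.swap_apply_left]
    show ((m-2) + (m-2)) % m = m - 4
    have he : (m-2) + (m-2) = (m-4) + m := by omega
    rw [he, Nat.add_mod_right]
    exact Nat.mod_eq_of_lt (by omega)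
  have hσm2 : ∀ x : Fin m, x.val = m - 2 → (σ x).val = m - 1 := by
    intro x hx
    have hxe : x = ⟨m-2, by omega⟩ := Fin.ext hx
    rw [hxe, hσval, Equiv.swap_apply_right]
    show (1 + (m-2)) % m = m - 1
    have he : 1 + (m-2) = m - 1 := by omega
    rw [he]
    exact Nat.mod_eq_of_lt (by omega)
  exact aux_cycle m hm K hK σ hstep hσ0 hσ1 hσm2
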